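/- Let D be a minimally strongly connected digraph, let V' ⊊ V(D) be a nonempty set of vertices inducing a strongly connected subgraph, and suppose V'' ⊋ V' is obtained by adding the vertices of a directed path from a vertex y ∉ V' (where some arc goes from V' to y) back to V', where the path meets V' only at its endpoint. If the induced subgraph on V'' is strongly connected, then there are exactly two arcs of D between V' and V''∖V': one from V' into V''∖V' and one from V''∖V' into V'. -/

import Mathlib

/-- Strong connectivity of the subgraph of the digraph `D` induced by `S`. -/
def SCOn {V : Type*} (D : V → V → Prop) (S : Set V) : Prop :=
  ∀ a ∈ S, ∀ b ∈ S, Relation.ReflTransGen (fun x y => x ∈ S ∧ y ∈ S ∧ D x y) a b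

/-- Strong connectivity of the digraph `D`. -/
def SC {V : Type*} (D : V → V → Prop) : Prop :=
  ∀ a b : V, Relation.ReflTransGen D a b

/-- `D` is minimally strongly connected: strongly connected, but deleting any arc
destroys strong connectivity. -/
def MinSC {V : Type*} (D : V → V → Prop) : Prop :=
  SC D ∧ ∀ a b, D a b → ¬ SC (fun x y => D x y ∧ (x, y) ≠ (a, b))

/-- If the endpoints of a deleted arc are still connected, deletion preserves SC. -/
theorem lift_aux {V : Type*} (D : V → V → Prop) (e : V × V)
    (h : Relation.ReflTransGen (fun x y => D x y ∧ (x, y) ≠ e) e.1 e.2)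
    (hSC : SC D) : SC (fun x y => D x y ∧ (x, y) ≠ e) := by
  intro a b
  induction hSC a b with
  | refl => exact .refl
  | @tail c d _ hd ih =>
    by_cases hcd : (c, d) = e
    · have hc : c = e.1 := congrArg Prod.fst hcd
      have hdd : d = e.2 := congrArg Prod.snd hcd
      subst hc; subst hdd
      exact ih.trans h
    · exact ih.tail ⟨hd, hcd⟩

theorem chain_aux {V : Type*} {m : ℕ} {p : Fin (m + 1) → V} {D' : V → V → Prop}
    (hp : ∀ i : Fin m, D' (p i.castSucc) (p i.succ)) :
    ∀ (l k : ℕ) (hl : l < m + 1) (hk : k ≤ l),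
      Relation.ReflTransGen D' (p ⟨k, lt_of_le_of_lt hk hl⟩) (p ⟨l, hl⟩) := by
  intro l
  induction l with
  | zero =>
    intro k hl hk
    have : k = 0 := Nat.le_zero.mp hk
    subst this; exact .refl
  | succ n ih =>
    intro k hl hk
    rcases Nat.lt_or_ge k (n + 1) with h | h
    · have hk' : k ≤ n := Nat.lt_succ_iff.mp h
      refine (ih k (by omega) hk').tail ?_
      exact hp ⟨n, by omega⟩
    · have : k = n + 1 := le_antisymm hk h
      subst this; exact .refl

theorem stmt15 {V : Type*} (D : V → V → Prop) (hD : MinSC D)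
    (V' : Set V) (hne : V'.Nonempty) (hproper : V' ≠ Set.univ) (hSC' : SCOn D V')
    (m : ℕ) (p : Fin (m + 1) → V) (hinj : Function.Injective p)
    (hout : ∀ i, p i ∉ V')
    (hpath : ∀ i : Fin m, D (p i.castSucc) (p i.succ))
    (x : V) (hx : x ∈ V') (hxy : D x (p 0))
    (z : V) (hz : z ∈ V') (hzend : D (p (Fin.last m)) z)
    (V'' : Set V) (hV'' : V'' = V' ∪ Set.range p)
    (hSC'' : SCOn D V'') :
    (∃! ab : V × V, ab.1 ∈ V' ∧ ab.2 ∈ V'' \ V' ∧ D ab.1 ab.2) ∧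
    (∃! cd : V × V, cd.1 ∈ V'' \ V' ∧ cd.2 ∈ V' ∧ D cd.1 cd.2) := by
  subst hV''
  have hmem : ∀ b, b ∈ (V' ∪ Set.range p) \ V' → ∃ j, p j = b := by
    rintro b ⟨hb1 | hb1, hb2⟩
    · exact absurd hb1 hb2
    · exact hb1
  constructor
  · refine ⟨(x, p 0), ⟨hx, ⟨Or.inr ⟨0, rfl⟩, hout 0⟩, hxy⟩, ?_⟩
    rintro ⟨a, b⟩ ⟨ha, hb, hab⟩
    obtain ⟨j, rfl⟩ := hmem b hb
    by_contra hne2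
    apply hD.2 a (p j) hab
    apply lift_aux D (a, p j) ?_ hD.1
    -- detour: a →* x in V', x → p 0, p 0 →* p j along the path
    have step1 : Relation.ReflTransGen (fun u v => D u v ∧ (u, v) ≠ (a, p j)) a x := by
      refine Relation.ReflTransGen.mono ?_ a x (hSC' a ha x hx)
      rintro u v ⟨hu, hv, huv⟩
      refine ⟨huv, fun h => ?_⟩
      have : v = p j := congrArg Prod.snd h
      exact hout j (this ▸ hv)
    have step2 : Relation.ReflTransGen (fun u v => D u v ∧ (u, v) ≠ (a, p j)) a (p 0) :=
      step1.tail ⟨hxy, fun h => hne2 h.symm⟩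
    have hp' : ∀ i : Fin m,
        (fun u v => D u v ∧ (u, v) ≠ (a, p j)) (p i.castSucc) (p i.succ) := by
      intro i
      refine ⟨hpath i, fun h => ?_⟩
      have : p i.castSucc = a := congrArg Prod.fst h
      exact hout i.castSucc (this ▸ ha)
    have step3 := chain_aux (p := p) (D' := fun u v => D u v ∧ (u, v) ≠ (a, p j)) hp' j.val 0 j.isLt (Nat.zero_le _)
    have h0 : (⟨0, lt_of_le_of_lt (Nat.zero_le _) j.isLt⟩ : Fin (m + 1)) = 0 := rfl
    rw [h0, Fin.eta] at step3
    exact step2.trans step3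
  · refine ⟨(p (Fin.last m), z), ⟨⟨Or.inr ⟨Fin.last m, rfl⟩, hout _⟩, hz, hzend⟩, ?_⟩
    rintro ⟨c, d⟩ ⟨hc, hd, hcd⟩
    obtain ⟨j, rfl⟩ := hmem c hc
    by_contra hne2
    apply hD.2 (p j) d hcd
    apply lift_aux D (p j, d) ?_ hD.1
    -- detour: p j →* p m along the path, p m → z, z →* d in V'
    have hp' : ∀ i : Fin m,
        (fun u v => D u v ∧ (u, v) ≠ (p j, d)) (p i.castSucc) (p i.succ) := by
      intro i
      refine ⟨hpath i, fun h => ?_⟩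
      have : p i.succ = d := congrArg Prod.snd h
      exact hout i.succ (this ▸ hd)
    have step1 := chain_aux (p := p) (D' := fun u v => D u v ∧ (u, v) ≠ (p j, d)) hp' m j.val (Nat.lt_succ_self m) (Nat.lt_succ_iff.mp j.isLt)
    have hlast : (⟨m, Nat.lt_succ_self m⟩ : Fin (m + 1)) = Fin.last m := rfl
    rw [hlast, Fin.eta] at step1
    have step2 : Relation.ReflTransGen (fun u v => D u v ∧ (u, v) ≠ (p j, d)) (p j) z :=
      step1.tail ⟨hzend, fun h => hne2 h.symm⟩
    have step3 : Relation.ReflTransGen (fun u v => D u v ∧ (u, v) ≠ (p j, d)) z d := by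
      refine Relation.ReflTransGen.mono ?_ z d (hSC' z hz d hd)
      rintro u v ⟨hu, hv, huv⟩
      refine ⟨huv, fun h => ?_⟩
      have : u = p j := congrArg Prod.fst h
      exact hout j (this ▸ hu)
    exact step2.trans step3
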